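/- (Critical points of the co-content are exactly Kirchhoff equilibria.) Let N ≥ 1, let î : Fin N → Fin N → ℝ → ℝ be a family of continuous current–voltage characteristics satisfying the antisymmetry î k j s = −(î j k (−s)) for all j, k, s, and let x : Fin N → ℝ be input currents. Define E : (Fin N → ℝ) → ℝ by E v = (1/2)·Σ_{j,k} (∫₀^{v j − v k} î j k s ds) + Σ_j x j · v j. Then E is differentiable, its partial derivative with respect to v j equals Σ_k î j k (v j − v k) + x j for every node j, and consequently v is a critical point of E (i.e. fderiv ℝ E v = 0) if and only if Kirchhoff's current law Σ_k î j k (v j − v k) + x j = 0 holds at every node j. -/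

import Mathlib

open MeasureTheory

/-- Critical points of the co-content are exactly Kirchhoff equilibria:
with continuous antisymmetric current–voltage characteristics `î` and co-content
`E v = (1/2)·Σ_{j,k} ∫₀^{v_j−v_k} î_{jk}(s) ds + Σ_j x_j v_j`, the function `E` is
differentiable, its partial derivative at `v` in direction `v_j` is
`Σ_k î_{jk}(v_j − v_k) + x_j`, and `fderiv ℝ E v = 0` iff Kirchhoff's current law
`Σ_k î_{jk}(v_j − v_k) + x_j = 0` holds at every node `j`. -/
theorem stmt18 {N : ℕ} (hN : 1 ≤ N)
    (ihat : Fin N → Fin N → ℝ → ℝ)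
    (hcont : ∀ j k, Continuous (ihat j k))
    (hanti : ∀ (j k : Fin N) (s : ℝ), ihat k j s = -(ihat j k (-s)))
    (x : Fin N → ℝ)
    (E : (Fin N → ℝ) → ℝ)
    (hE : ∀ v : Fin N → ℝ,
      E v = (1 / 2) * ∑ j, ∑ k, (∫ s in (0 : ℝ)..(v j - v k), ihat j k s) +
        ∑ j, x j * v j) :
    Differentiable ℝ E ∧
      (∀ (v : Fin N → ℝ) (j : Fin N),
        fderiv ℝ E v (Pi.single j 1) = ∑ k, ihat j k (v j - v k) + x j) ∧
      (∀ v : Fin N → ℝ,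
        fderiv ℝ E v = 0 ↔ ∀ j, ∑ k, ihat j k (v j - v k) + x j = 0) := by
  have hEfun : E = fun v => (1 / 2) * ∑ j, ∑ k, (∫ s in (0 : ℝ)..(v j - v k), ihat j k s) +
      ∑ j, x j * v j := funext hE
  -- candidate derivative
  set L : (Fin N → ℝ) → ((Fin N → ℝ) →L[ℝ] ℝ) := fun v =>
    ∑ j, (∑ k, ihat j k (v j - v k) + x j) • (ContinuousLinearMap.proj j) with hL
  have hLapp : ∀ v u, L v u = ∑ j, (∑ k, ihat j k (v j - v k) + x j) * u j := by
    intro v u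
    simp [hL, ContinuousLinearMap.sum_apply]
  have key : ∀ v, HasFDerivAt E (L v) v := by
    intro v
    -- derivative of each integral term
    have hterm : ∀ j k : Fin N, HasFDerivAt
        (fun w : Fin N → ℝ => ∫ s in (0 : ℝ)..(w j - w k), ihat j k s)
        ((ihat j k (v j - v k)) • ((ContinuousLinearMap.proj j : (Fin N → ℝ) →L[ℝ] ℝ)
          - ContinuousLinearMap.proj k)) v := by
      intro j k
      have hd : HasDerivAt (fun t : ℝ => ∫ s in (0 : ℝ)..t, ihat j k s)
          (ihat j k (v j - v k)) (v j - v k) :=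
        ((hcont j k).integral_hasStrictDerivAt 0 (v j - v k)).hasDerivAt
      have hlin : HasFDerivAt (fun w : Fin N → ℝ => w j - w k)
          ((ContinuousLinearMap.proj j : (Fin N → ℝ) →L[ℝ] ℝ) - ContinuousLinearMap.proj k) v :=
        ((ContinuousLinearMap.proj j : (Fin N → ℝ) →L[ℝ] ℝ)
          - ContinuousLinearMap.proj k).hasFDerivAt
      exact hd.comp_hasFDerivAt v hlin
    have hsum : HasFDerivAt
        (fun w : Fin N → ℝ => ∑ j, ∑ k, (∫ s in (0 : ℝ)..(w j - w k), ihat j k s))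
        (∑ j, ∑ k, (ihat j k (v j - v k)) • ((ContinuousLinearMap.proj j : (Fin N → ℝ) →L[ℝ] ℝ)
          - ContinuousLinearMap.proj k)) v := by
      refine HasFDerivAt.fun_sum fun j _ => HasFDerivAt.fun_sum fun k _ => hterm j k
    have hlinpart : HasFDerivAt (fun w : Fin N → ℝ => ∑ j, x j * w j)
        (∑ j, (x j) • (ContinuousLinearMap.proj j : (Fin N → ℝ) →L[ℝ] ℝ)) v := by
      refine HasFDerivAt.fun_sum fun j _ => ?_
      simpa using ((ContinuousLinearMap.proj j : (Fin N → ℝ) →L[ℝ] ℝ).hasFDerivAt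
        (x := v)).const_mul (x j)
    have htotal := (hsum.const_mul (1 / 2 : ℝ)).add hlinpart
    rw [hEfun]
    refine htotal.congr_fderiv ?_
    -- show L v equals the computed derivative
    ext u
    rw [hLapp]
    simp only [ContinuousLinearMap.add_apply, ContinuousLinearMap.smul_apply,
      ContinuousLinearMap.sum_apply, ContinuousLinearMap.sub_apply,
      ContinuousLinearMap.proj_apply, smul_eq_mul]
    have swap : ∑ j, ∑ k, ihat j k (v j - v k) * (u j - u k)
        = 2 * ∑ j, (∑ k, ihat j k (v j - v k)) * u j := by
      have h2 : ∀ p q : Fin N, ihat q p (v q - v p) * u p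
          = -(ihat p q (v p - v q) * u p) := by
        intro p q; rw [hanti p q (v q - v p), neg_sub]; ring
      simp only [mul_sub, Finset.sum_sub_distrib]
      rw [Finset.sum_comm (s := Finset.univ) (t := Finset.univ)
        (f := fun j k => ihat j k (v j - v k) * u k)]
      simp only [h2, Finset.sum_neg_distrib, sub_neg_eq_add, ← Finset.sum_mul]
      ring
    rw [swap]
    simp only [add_mul, Finset.sum_add_distrib, ← Finset.sum_mul]
    ring
  refine ⟨fun v => (key v).differentiableAt, ?_, ?_⟩
  · intro v j
    rw [(key v).fderiv, hLapp]
    rw [Finset.sum_eq_single j]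
    · simp
    · intro b _ hb; simp [Pi.single_apply, hb]
    · simp
  · intro v
    rw [(key v).fderiv]
    constructor
    · intro h j
      have := congrArg (fun (f : (Fin N → ℝ) →L[ℝ] ℝ) => f (Pi.single j 1)) h
      simp only [ContinuousLinearMap.zero_apply] at this
      rw [hLapp] at this
      rw [Finset.sum_eq_single j] at this
      · simpa using this
      · intro b _ hb; simp [Pi.single_apply, hb]
      · simp
    · intro h
      ext u
      rw [hLapp]
      simp [h]
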